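/- Let H : [0,T] × ℝ^k × ℝ^k × ℝ → ℝ be C², let 0 ≤ s < t ≤ T, and for q = (x,y,z) ∈ ℝ^k × ℝ^k × ℝ let τ ↦ φ^{s,τ}(q) = (x(τ,q), y(τ,q), z(τ,q)) solve the characteristic equations on [s,t] with φ^{s,s}(q) = q. Suppose Φ : ℝ^k × ℝ^k × ℝ → ℝ is a generating function for the map φ^{s,t}. Then for every q = (x,y,z): Φ(x, y(t,q), z) = ∫_s^t ( ⟨ẋ(τ,q), y(t,q) − y(τ,q)⟩ + H(τ, φ^{s,τ}(q)) ) dτ. -/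

import Mathlib

open RealInnerProductSpace Filter Topology

/-- The partial gradient of the Hamiltonian `H(t,x,y,z)` in the `x` variable. -/
noncomputable def pdx {k : ℕ}
    (H : ℝ → EuclideanSpace ℝ (Fin k) → EuclideanSpace ℝ (Fin k) → ℝ → ℝ)
    (t : ℝ) (x y : EuclideanSpace ℝ (Fin k)) (z : ℝ) : EuclideanSpace ℝ (Fin k) :=
  gradient (fun x' => H t x' y z) x

/-- The partial gradient of the Hamiltonian `H(t,x,y,z)` in the `y` variable. -/
noncomputable def pdy {k : ℕ}
    (H : ℝ → EuclideanSpace ℝ (Fin k) → EuclideanSpace ℝ (Fin k) → ℝ → ℝ)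
    (t : ℝ) (x y : EuclideanSpace ℝ (Fin k)) (z : ℝ) : EuclideanSpace ℝ (Fin k) :=
  gradient (fun y' => H t x y' z) y

/-- The partial derivative of the Hamiltonian `H(t,x,y,z)` in the `z` variable. -/
noncomputable def pdz {k : ℕ}
    (H : ℝ → EuclideanSpace ℝ (Fin k) → EuclideanSpace ℝ (Fin k) → ℝ → ℝ)
    (t : ℝ) (x y : EuclideanSpace ℝ (Fin k)) (z : ℝ) : ℝ :=
  deriv (fun z' => H t x y z') z

/-- The curve `τ ↦ (x τ, y τ, z τ)` solves the characteristic equations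
`ẋ = ∂_yH`, `ẏ = −∂_xH − (∂_zH) y`, `ż = ⟨y, ∂_yH⟩ − H` on the set `I`. -/
def IsCharSol {k : ℕ}
    (H : ℝ → EuclideanSpace ℝ (Fin k) → EuclideanSpace ℝ (Fin k) → ℝ → ℝ)
    (I : Set ℝ) (x y : ℝ → EuclideanSpace ℝ (Fin k)) (z : ℝ → ℝ) : Prop :=
  ∀ τ ∈ I,
    HasDerivAt x (pdy H τ (x τ) (y τ) (z τ)) τ ∧
    HasDerivAt y (-pdx H τ (x τ) (y τ) (z τ) - pdz H τ (x τ) (y τ) (z τ) • y τ) τ ∧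
    HasDerivAt z (⟪y τ, pdy H τ (x τ) (y τ) (z τ)⟫ - H τ (x τ) (y τ) (z τ)) τ

/-- `Φ(x,Y,z)` is a generating function for the contactomorphism `φ`. -/
def IsGenFun {k : ℕ}
    (Φ : EuclideanSpace ℝ (Fin k) → EuclideanSpace ℝ (Fin k) → ℝ → ℝ)
    (φ : EuclideanSpace ℝ (Fin k) × EuclideanSpace ℝ (Fin k) × ℝ →
      EuclideanSpace ℝ (Fin k) × EuclideanSpace ℝ (Fin k) × ℝ) : Prop :=
  (∀ x Y z, 1 - deriv (fun z' => Φ x Y z') z ≠ 0) ∧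
  ∀ x y z X Y Z,
    (X - x = gradient (fun Y' => Φ x Y' z) Y ∧
      Y - y = -gradient (fun x' => Φ x' Y z) x - deriv (fun z' => Φ x Y z') z • y ∧
      Z - z = ⟪Y, X - x⟫ - Φ x Y z)
    ↔ φ (x, y, z) = (X, Y, Z)


lemma pdy_eq_fderiv {k : ℕ}
    (H : ℝ → EuclideanSpace ℝ (Fin k) → EuclideanSpace ℝ (Fin k) → ℝ → ℝ)
    (hH : ContDiff ℝ 2 fun p : ℝ × EuclideanSpace ℝ (Fin k) × EuclideanSpace ℝ (Fin k) × ℝ =>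
      H p.1 p.2.1 p.2.2.1 p.2.2.2) :
    Continuous (fun p : ℝ × EuclideanSpace ℝ (Fin k) × EuclideanSpace ℝ (Fin k) × ℝ =>
      pdy H p.1 p.2.1 p.2.2.1 p.2.2.2) := by
  let L : EuclideanSpace ℝ (Fin k) →L[ℝ]
      ℝ × EuclideanSpace ℝ (Fin k) × EuclideanSpace ℝ (Fin k) × ℝ :=
    (0 : EuclideanSpace ℝ (Fin k) →L[ℝ] ℝ).prod
      ((0 : EuclideanSpace ℝ (Fin k) →L[ℝ] EuclideanSpace ℝ (Fin k)).prod
        ((ContinuousLinearMap.id ℝ (EuclideanSpace ℝ (Fin k))).prod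
          (0 : EuclideanSpace ℝ (Fin k) →L[ℝ] ℝ)))
  have key : ∀ p : ℝ × EuclideanSpace ℝ (Fin k) × EuclideanSpace ℝ (Fin k) × ℝ,
      pdy H p.1 p.2.1 p.2.2.1 p.2.2.2 =
      (InnerProductSpace.toDual ℝ (EuclideanSpace ℝ (Fin k))).symm
        ((fderiv ℝ (fun p' : ℝ × EuclideanSpace ℝ (Fin k) × EuclideanSpace ℝ (Fin k) × ℝ =>
          H p'.1 p'.2.1 p'.2.2.1 p'.2.2.2) p).comp L) := by
    intro p
    have hg : HasFDerivAt (fun y' : EuclideanSpace ℝ (Fin k) =>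
        ((p.1, p.2.1, y', p.2.2.2) :
          ℝ × EuclideanSpace ℝ (Fin k) × EuclideanSpace ℝ (Fin k) × ℝ)) L p.2.2.1 :=
      HasFDerivAt.prodMk (hasFDerivAt_const p.1 _) (HasFDerivAt.prodMk (hasFDerivAt_const p.2.1 _)
        (HasFDerivAt.prodMk (hasFDerivAt_id _) (hasFDerivAt_const p.2.2.2 _)))
    have hfd : HasFDerivAt (fun y' : EuclideanSpace ℝ (Fin k) => H p.1 p.2.1 y' p.2.2.2)
        ((fderiv ℝ (fun p' : ℝ × EuclideanSpace ℝ (Fin k) × EuclideanSpace ℝ (Fin k) × ℝ =>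
          H p'.1 p'.2.1 p'.2.2.1 p'.2.2.2) p).comp L) p.2.2.1 :=
      by have h := (((hH.differentiable (by norm_num)) p).hasFDerivAt).comp p.2.2.1 hg; exact h
    simp only [pdy, gradient, hfd.fderiv]
  have hcont : Continuous fun p : ℝ × EuclideanSpace ℝ (Fin k) × EuclideanSpace ℝ (Fin k) × ℝ =>
      (InnerProductSpace.toDual ℝ (EuclideanSpace ℝ (Fin k))).symm
        ((fderiv ℝ (fun p' : ℝ × EuclideanSpace ℝ (Fin k) × EuclideanSpace ℝ (Fin k) × ℝ =>
          H p'.1 p'.2.1 p'.2.2.1 p'.2.2.2) p).comp L) :=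
    (LinearIsometryEquiv.continuous _).comp
      ((hH.continuous_fderiv (by norm_num)).clm_comp continuous_const)
  exact hcont.congr fun p => (key p).symm

/-- If `τ ↦ (X q τ, Y q τ, Z q τ)` is the characteristic flow on `[s,t]`
starting from `q` at time `s`, and `Φ` is a generating function for the time-`t` flow map
`φ^{s,t}`, then `Φ(x, y(t,q), z) = ∫_s^t (⟨ẋ(τ,q), y(t,q) − y(τ,q)⟩ + H(τ, φ^{s,τ}(q))) dτ`
(where `ẋ(τ,q) = ∂_yH` along the flow). -/
theorem generating_function_action_formula {k : ℕ} (T s t : ℝ)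
    (hs : 0 ≤ s) (hst : s < t) (htT : t ≤ T)
    (H : ℝ → EuclideanSpace ℝ (Fin k) → EuclideanSpace ℝ (Fin k) → ℝ → ℝ)
    (hH : ContDiff ℝ 2 fun p : ℝ × EuclideanSpace ℝ (Fin k) × EuclideanSpace ℝ (Fin k) × ℝ =>
      H p.1 p.2.1 p.2.2.1 p.2.2.2)
    (X Y : EuclideanSpace ℝ (Fin k) × EuclideanSpace ℝ (Fin k) × ℝ → ℝ →
      EuclideanSpace ℝ (Fin k))
    (Z : EuclideanSpace ℝ (Fin k) × EuclideanSpace ℝ (Fin k) × ℝ → ℝ → ℝ)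
    (hinit : ∀ q, X q s = q.1 ∧ Y q s = q.2.1 ∧ Z q s = q.2.2)
    (hflow : ∀ q, IsCharSol H (Set.Icc s t) (X q) (Y q) (Z q))
    (Φ : EuclideanSpace ℝ (Fin k) → EuclideanSpace ℝ (Fin k) → ℝ → ℝ)
    (hΦ : IsGenFun Φ (fun q => (X q t, Y q t, Z q t))) :
    ∀ q : EuclideanSpace ℝ (Fin k) × EuclideanSpace ℝ (Fin k) × ℝ,
      Φ q.1 (Y q t) q.2.2 =
        ∫ τ in s..t,
          (⟪pdy H τ (X q τ) (Y q τ) (Z q τ), Y q t - Y q τ⟫ +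
            H τ (X q τ) (Y q τ) (Z q τ)) := by
  intro q
  obtain ⟨hx0, hy0, hz0⟩ := hinit q
  -- value of Φ from the generating relation
  have hφ := ((hΦ.2 q.1 q.2.1 q.2.2 (X q t) (Y q t) (Z q t)).mpr rfl).2.2
  -- continuity of the flow on [s,t]
  have hXc : ContinuousOn (X q) (Set.Icc s t) :=
    fun τ hτ => ((hflow q τ hτ).1).continuousAt.continuousWithinAt
  have hYc : ContinuousOn (Y q) (Set.Icc s t) :=
    fun τ hτ => ((hflow q τ hτ).2.1).continuousAt.continuousWithinAt
  have hZc : ContinuousOn (Z q) (Set.Icc s t) :=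
    fun τ hτ => ((hflow q τ hτ).2.2).continuousAt.continuousWithinAt
  have hflowC : ContinuousOn
      (fun τ => ((τ, X q τ, Y q τ, Z q τ) :
        ℝ × EuclideanSpace ℝ (Fin k) × EuclideanSpace ℝ (Fin k) × ℝ)) (Set.Icc s t) :=
    continuousOn_id.prodMk (hXc.prodMk (hYc.prodMk hZc))
  set F : ℝ → ℝ := fun τ => ⟪Y q t, X q τ⟫ - Z q τ with hF
  set F' : ℝ → ℝ := fun τ =>
    ⟪pdy H τ (X q τ) (Y q τ) (Z q τ), Y q t - Y q τ⟫ + H τ (X q τ) (Y q τ) (Z q τ) with hF'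
  have huIcc : Set.uIcc s t = Set.Icc s t := Set.uIcc_of_le hst.le
  have hderiv : ∀ τ ∈ Set.uIcc s t, HasDerivAt F (F' τ) τ := by
    intro τ hτ
    rw [huIcc] at hτ
    obtain ⟨hX, hY, hZ⟩ := hflow q τ hτ
    have h1 : HasDerivAt (fun τ' => (⟪Y q t, X q τ'⟫ : ℝ))
        (⟪Y q t, pdy H τ (X q τ) (Y q τ) (Z q τ)⟫ + ⟪(0 : EuclideanSpace ℝ (Fin k)), X q τ⟫)
        τ := (hasDerivAt_const τ (Y q t)).inner ℝ hX
    have := h1.sub hZ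
    refine this.congr_deriv ?_
    simp only [hF', inner_zero_left, add_zero, inner_sub_right]
    rw [real_inner_comm (pdy H τ (X q τ) (Y q τ) (Z q τ)) (Y q t),
      real_inner_comm (pdy H τ (X q τ) (Y q τ) (Z q τ)) (Y q τ)]
    ring
  have hint : IntervalIntegrable F' MeasureTheory.volume s t := by
    apply ContinuousOn.intervalIntegrable
    rw [huIcc]
    exact (((pdy_eq_fderiv H hH).comp_continuousOn hflowC).inner
        (continuousOn_const.sub hYc)).add (hH.continuous.comp_continuousOn hflowC)
  have hftc := intervalIntegral.integral_eq_sub_of_hasDerivAt hderiv hint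
  have hval : (∫ τ in s..t, F' τ) = ⟪Y q t, X q t⟫ - Z q t - (⟪Y q t, q.1⟫ - q.2.2) := by
    rw [hftc]; simp [hF, hx0, hz0]
  have : Φ q.1 (Y q t) q.2.2 = ⟪Y q t, X q t⟫ - ⟪Y q t, q.1⟫ - (Z q t - q.2.2) := by
    rw [inner_sub_right] at hφ; linarith
  rw [this]
  rw [show (∫ τ in s..t,
      (⟪pdy H τ (X q τ) (Y q τ) (Z q τ), Y q t - Y q τ⟫ +
        H τ (X q τ) (Y q τ) (Z q τ))) = ∫ τ in s..t, F' τ from rfl, hval]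
  ring
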